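/- Let X_1, …, X_n be {0,1}-valued random variables on a probability space such that the family {1 − X_i} is 1-correlated, let μ = E[∑_{i=1}^n X_i], and let μ̄ ≥ μ be any upper bound on the mean. Then for every δ > 0, Pr[∑_{i=1}^n X_i ≤ μ − δμ̄] ≤ exp(−δ²μ̄/2). -/

import Mathlib

open MeasureTheory Real

lemma exp_neg_le_quad (x : ℝ) (hx : 0 ≤ x) : Real.exp (-x) ≤ 1 - x + x^2/2 := by
  have hmono : Monotone (fun x : ℝ => 1 - x + x^2/2 - Real.exp (-x)) := by
    apply monotone_of_deriv_nonneg
    · fun_prop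
    · intro y
      have hd : HasDerivAt (fun x : ℝ => 1 - x + x^2/2 - Real.exp (-x))
          (-1 + y - Real.exp (-y) * (-1)) y := by
        have h1 : HasDerivAt (fun x : ℝ => 1 - x + x^2/2) (-1 + y) y := by
          have := ((hasDerivAt_id y).const_sub 1).add
            (((hasDerivAt_pow 2 y)).div_const 2)
          simpa [Pi.add_def] using this.congr_deriv (by ring)
        exact h1.sub ((Real.hasDerivAt_exp (-y)).comp y ((hasDerivAt_id y).neg) |>.congr_deriv (by ring))
      rw [hd.deriv]
      nlinarith [Real.add_one_le_exp (-y)]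
  have h0 : (fun x : ℝ => 1 - x + x^2/2 - Real.exp (-x)) 0 = 0 := by simp
  have := hmono hx
  simp only [h0] at this
  linarith [this]

theorem stmt6 {Ω : Type*} [MeasurableSpace Ω] (P : Measure Ω) [IsProbabilityMeasure P]
    {n : ℕ} (X : Fin n → Ω → ℝ) (hmeas : ∀ i, Measurable (X i))
    (h01 : ∀ i ω, X i ω = 0 ∨ X i ω = 1)
    (hcorr : ∀ S : Finset (Fin n),
      ∫ ω, ∏ i ∈ S, (1 - X i ω) ∂P ≤ ∏ i ∈ S, ∫ ω, (1 - X i ω) ∂P)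
    (m mbar : ℝ) (hm : m = ∫ ω, ∑ i, X i ω ∂P) (hmbar : m ≤ mbar)
    (δ : ℝ) (hδ0 : 0 < δ) :
    P {ω | ∑ i, X i ω ≤ m - δ * mbar} ≤ ENNReal.ofReal (Real.exp (-(δ ^ 2 * mbar) / 2)) := by
  set c : ℝ := Real.exp δ - 1 with hc
  have hc0 : 0 ≤ c := by
    have := Real.add_one_le_exp δ; simp [hc]; linarith
  -- products of (1 - X i) are {0,1}-valued
  have hprod01 : ∀ (t : Finset (Fin n)) ω, (∏ i ∈ t, (1 - X i ω)) = 0 ∨ (∏ i ∈ t, (1 - X i ω)) = 1 := by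
    intro t ω
    induction t using Finset.induction with
    | empty => right; simp
    | @insert a s hni ih =>
      rw [Finset.prod_insert hni]
      rcases h01 a ω with h | h <;> rcases ih with h2 | h2 <;> simp [h, h2]
  have hprodmeas : ∀ t : Finset (Fin n), Measurable (fun ω => ∏ i ∈ t, (1 - X i ω)) := by
    intro t; exact Finset.measurable_prod _ fun i _ => (measurable_const.sub (hmeas i))
  have hprodint : ∀ t : Finset (Fin n), Integrable (fun ω => ∏ i ∈ t, (1 - X i ω)) P := by
    intro t
    refine (integrable_const (1 : ℝ)).mono' (hprodmeas t).aestronglyMeasurable ?_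
    filter_upwards with ω
    rcases hprod01 t ω with h | h <;> simp [h]
  have hXint : ∀ i, Integrable (X i) P := by
    intro i
    refine (integrable_const (1 : ℝ)).mono' (hmeas i).aestronglyMeasurable ?_
    filter_upwards with ω
    rcases h01 i ω with h | h <;> simp [h]
  -- q i and p i
  set q : Fin n → ℝ := fun i => ∫ ω, (1 - X i ω) ∂P with hq
  set p : Fin n → ℝ := fun i => ∫ ω, X i ω ∂P with hp
  have hqp : ∀ i, q i = 1 - p i := by
    intro i
    simp [hq, hp, integral_sub (integrable_const 1) (hXint i)]
  have hp0 : ∀ i, 0 ≤ p i := fun i => integral_nonneg fun ω => by rcases h01 i ω with h | h <;> simp [h]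
  have hq0 : ∀ i, 0 ≤ q i := fun i => integral_nonneg fun ω => by rcases h01 i ω with h | h <;> simp [h]
  have hsump : ∑ i, p i = m := by
    rw [hm, integral_finset_sum _ fun i _ => hXint i]
  -- pointwise identity
  have hpt : ∀ ω, Real.exp (δ * ∑ i, (1 - X i ω)) = ∏ i, (1 + c * (1 - X i ω)) := by
    intro ω
    rw [Finset.mul_sum, Real.exp_sum]
    refine Finset.prod_congr rfl fun i _ => ?_
    rcases h01 i ω with h | h <;> simp [h, hc]
  -- expansion of the product
  have hexpand : ∀ ω, (∏ i, (1 + c * (1 - X i ω)))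
      = ∑ t ∈ (Finset.univ : Finset (Fin n)).powerset, c ^ t.card * ∏ i ∈ t, (1 - X i ω) := by
    intro ω
    have := Finset.prod_add (fun i => c * (1 - X i ω)) (fun _ => (1 : ℝ)) Finset.univ
    simp only [Finset.prod_const_one, mul_one] at this
    calc ∏ i, (1 + c * (1 - X i ω)) = ∏ i, (c * (1 - X i ω) + 1) := by
          exact Finset.prod_congr rfl fun i _ => add_comm _ _
      _ = ∑ t ∈ (Finset.univ : Finset (Fin n)).powerset, ∏ i ∈ t, (c * (1 - X i ω)) := this
      _ = ∑ t ∈ (Finset.univ : Finset (Fin n)).powerset, c ^ t.card * ∏ i ∈ t, (1 - X i ω) :=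
          Finset.sum_congr rfl fun t _ => by rw [Finset.prod_mul_distrib, Finset.prod_const]
  -- same expansion for q
  have hexpandq : (∏ i, (1 + c * q i))
      = ∑ t ∈ (Finset.univ : Finset (Fin n)).powerset, c ^ t.card * ∏ i ∈ t, q i := by
    have := Finset.prod_add (fun i => c * q i) (fun _ => (1 : ℝ)) Finset.univ
    simp only [Finset.prod_const_one, mul_one] at this
    calc ∏ i, (1 + c * q i) = ∏ i, (c * q i + 1) :=
          Finset.prod_congr rfl fun i _ => add_comm _ _
      _ = ∑ t ∈ (Finset.univ : Finset (Fin n)).powerset, ∏ i ∈ t, (c * q i) := this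
      _ = ∑ t ∈ (Finset.univ : Finset (Fin n)).powerset, c ^ t.card * ∏ i ∈ t, q i :=
          Finset.sum_congr rfl fun t _ => by rw [Finset.prod_mul_distrib, Finset.prod_const]
  -- integrability of the exponential moment
  have hfun : (fun ω => ∏ i, (1 + c * (1 - X i ω)))
      = fun ω => ∑ t ∈ (Finset.univ : Finset (Fin n)).powerset, c ^ t.card * ∏ i ∈ t, (1 - X i ω) :=
    funext hexpand
  have hF : Integrable (fun ω => ∏ i, (1 + c * (1 - X i ω))) P := by
    rw [hfun]
    exact integrable_finset_sum _ fun t _ => (hprodint t).const_mul _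
  -- MGF bound via 1-correlation
  have hMGF : ∫ ω, ∏ i, (1 + c * (1 - X i ω)) ∂P ≤ ∏ i, (1 + c * q i) := by
    rw [hexpandq]
    have hL : ∫ ω, ∏ i, (1 + c * (1 - X i ω)) ∂P
        = ∑ t ∈ (Finset.univ : Finset (Fin n)).powerset,
            c ^ t.card * ∫ ω, ∏ i ∈ t, (1 - X i ω) ∂P := by
      rw [hfun, integral_finset_sum _ fun t _ => (hprodint t).const_mul _]
      exact Finset.sum_congr rfl fun t _ => integral_const_mul _ _
    rw [hL]
    refine Finset.sum_le_sum fun t _ => ?_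
    exact mul_le_mul_of_nonneg_left (hcorr t) (pow_nonneg hc0 _)
  -- per-factor exponential bound
  have hfac : ∀ i, 1 + c * q i ≤ Real.exp (δ - (1 - Real.exp (-δ)) * p i) := by
    intro i
    have hinv : Real.exp (-δ) * Real.exp δ = 1 := by rw [← Real.exp_add]; simp
    have hid : 1 + c * q i = Real.exp δ * (1 + (-(1 - Real.exp (-δ)) * p i)) := by
      rw [hqp i, hc]; linear_combination (-(p i)) * hinv
    rw [hid]
    calc Real.exp δ * (1 + (-(1 - Real.exp (-δ)) * p i))
        ≤ Real.exp δ * Real.exp (-(1 - Real.exp (-δ)) * p i) := by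
          refine mul_le_mul_of_nonneg_left ?_ (Real.exp_pos δ).le
          have := Real.add_one_le_exp (-(1 - Real.exp (-δ)) * p i)
          linarith
      _ = Real.exp (δ - (1 - Real.exp (-δ)) * p i) := by rw [← Real.exp_add]; ring_nf
  have hprodle : ∏ i, (1 + c * q i) ≤ Real.exp ((n : ℝ) * δ - (1 - Real.exp (-δ)) * m) := by
    calc ∏ i, (1 + c * q i)
        ≤ ∏ i, Real.exp (δ - (1 - Real.exp (-δ)) * p i) :=
          Finset.prod_le_prod (fun i _ => by nlinarith [mul_nonneg hc0 (hq0 i)])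
            (fun i _ => hfac i)
      _ = Real.exp (∑ i, (δ - (1 - Real.exp (-δ)) * p i)) := (Real.exp_sum _ _).symm
      _ = Real.exp ((n : ℝ) * δ - (1 - Real.exp (-δ)) * m) := by
          rw [Finset.sum_sub_distrib, Finset.sum_const, Finset.card_univ, ← Finset.mul_sum,
            hsump]
          simp [nsmul_eq_mul]
  -- Markov's inequality
  set f : Ω → ℝ := fun ω => Real.exp (δ * ∑ i, (1 - X i ω)) with hf
  have hfeq : f = fun ω => ∏ i, (1 + c * (1 - X i ω)) := funext hpt
  have hfint : Integrable f P := hfeq ▸ hF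
  set ε : ℝ := Real.exp (δ * ((n : ℝ) - (m - δ * mbar))) with hε
  have hsub : {ω | ∑ i, X i ω ≤ m - δ * mbar} ⊆ {ω | ε ≤ f ω} := by
    intro ω hω
    simp only [Set.mem_setOf_eq] at hω ⊢
    rw [hf, hε]
    apply Real.exp_le_exp.2
    have hsum : ∑ i, (1 - X i ω) = (n : ℝ) - ∑ i, X i ω := by
      rw [Finset.sum_sub_distrib]; simp
    rw [hsum]
    have : (n : ℝ) - (m - δ * mbar) ≤ (n : ℝ) - ∑ i, X i ω := by linarith
    exact mul_le_mul_of_nonneg_left this hδ0.le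
  have hmarkov : ε * (P {ω | ε ≤ f ω}).toReal ≤ ∫ ω, f ω ∂P :=
    mul_meas_ge_le_integral_of_nonneg (ae_of_all _ fun ω => (Real.exp_pos _).le) hfint ε
  have hintf : ∫ ω, f ω ∂P ≤ Real.exp ((n : ℝ) * δ - (1 - Real.exp (-δ)) * m) := by
    rw [hfeq]; exact le_trans hMGF hprodle
  -- combine
  have hm0 : 0 ≤ m := by
    rw [hm]
    refine integral_nonneg fun ω => ?_
    exact Finset.sum_nonneg fun i _ => by rcases h01 i ω with h | h <;> simp [h]
  have hmbar0 : 0 ≤ mbar := le_trans hm0 hmbar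
  have htR : (P {ω | ∑ i, X i ω ≤ m - δ * mbar}).toReal
      ≤ Real.exp (-(δ ^ 2 * mbar) / 2) := by
    have h1 : (P {ω | ∑ i, X i ω ≤ m - δ * mbar}).toReal ≤ (P {ω | ε ≤ f ω}).toReal :=
      ENNReal.toReal_mono (measure_ne_top _ _) (measure_mono hsub)
    have h2 : ε * (P {ω | ε ≤ f ω}).toReal ≤ Real.exp ((n : ℝ) * δ - (1 - Real.exp (-δ)) * m) :=
      le_trans hmarkov hintf
    have hεpos : 0 < ε := Real.exp_pos _
    have h3 : (P {ω | ε ≤ f ω}).toReal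
        ≤ Real.exp ((n : ℝ) * δ - (1 - Real.exp (-δ)) * m) / ε := by
      rw [le_div_iff₀ hεpos]; linarith [h2]
    have h4 : Real.exp ((n : ℝ) * δ - (1 - Real.exp (-δ)) * m) / ε
        = Real.exp (m * (δ - 1 + Real.exp (-δ)) - δ ^ 2 * mbar) := by
      rw [hε, ← Real.exp_sub]; congr 1; ring
    have h5 : m * (δ - 1 + Real.exp (-δ)) - δ ^ 2 * mbar ≤ -(δ ^ 2 * mbar) / 2 := by
      have ha : 0 ≤ δ - 1 + Real.exp (-δ) := by
        have := Real.add_one_le_exp (-δ); linarith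
      have hb : δ - 1 + Real.exp (-δ) ≤ δ ^ 2 / 2 := by
        have := exp_neg_le_quad δ hδ0.le; linarith
      have hmt : m * (δ - 1 + Real.exp (-δ)) ≤ mbar * (δ ^ 2 / 2) :=
        le_trans (mul_le_mul_of_nonneg_right hmbar ha)
          (mul_le_mul_of_nonneg_left hb hmbar0)
      linarith
    calc (P {ω | ∑ i, X i ω ≤ m - δ * mbar}).toReal
        ≤ Real.exp ((n : ℝ) * δ - (1 - Real.exp (-δ)) * m) / ε := le_trans h1 h3
      _ = Real.exp (m * (δ - 1 + Real.exp (-δ)) - δ ^ 2 * mbar) := h4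
      _ ≤ Real.exp (-(δ ^ 2 * mbar) / 2) := Real.exp_le_exp.2 h5
  calc P {ω | ∑ i, X i ω ≤ m - δ * mbar}
      = ENNReal.ofReal (P {ω | ∑ i, X i ω ≤ m - δ * mbar}).toReal :=
        (ENNReal.ofReal_toReal (measure_ne_top _ _)).symm
    _ ≤ ENNReal.ofReal (Real.exp (-(δ ^ 2 * mbar) / 2)) := ENNReal.ofReal_le_ofReal htR
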